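/- Let χ be a non-principal Dirichlet character modulo q and k a positive integer. For Re(s) > 1/2 (in the region of analytic continuation), |F_k(χ,s)| ≪_ε k^ε |L(χ,s)|^3, where F_k(χ,s) is the meromorphic continuation of Σ_{n≥1} χ(n) d_3(nk) n^{−s}. -/

import Mathlib

open Finset Complex

/-- The 3-fold divisor function `d₃(n) = ∑_{abc = n} 1`. -/
noncomputable def d3 (n : ℕ) : ℕ := ∑ d ∈ n.divisors, d.divisors.card

/-- The meromorphic continuation of `F_k(χ,s) = ∑ χ(n) d₃(nk) n^{-s}` for `Re(s) > 1/2`,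
given by `A_k(χ,s) · (∏_{p∣k}(1-χ(p)p^{-s})^3) · L(χ,s)^3`. -/
noncomputable def Fk {q : ℕ} [NeZero q] (χ : DirichletCharacter ℂ q) (k : ℕ) (s : ℂ) : ℂ :=
  (∑' n : {n : ℕ // 0 < n ∧ ∀ p : ℕ, p.Prime → p ∣ n → p ∣ k},
      χ (n : ℕ) * d3 (k * n) / ((n : ℕ) : ℂ) ^ s) *
    ((∏ p ∈ k.primeFactors, (1 - χ p * (p : ℂ) ^ (-s)) ^ 3) *
      DirichletCharacter.LFunction χ s ^ 3)

namespace FkAux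

/-- Submultiplicativity of the divisor-counting function. -/
lemma card_divisors_mul_le (m n : ℕ) (hm : m ≠ 0) (hn : n ≠ 0) :
    (m * n).divisors.card ≤ m.divisors.card * n.divisors.card := by
  rw [← Finset.card_product]
  apply Finset.card_le_card_of_injOn (fun d => (Nat.gcd d m, d / Nat.gcd d m))
  · intro d hd
    rw [Finset.mem_coe, Nat.mem_divisors] at hd
    obtain ⟨hdvd, hmn0⟩ := hd
    have hd0 : d ≠ 0 := by
      rintro rfl
      exact hmn0 (zero_dvd_iff.mp hdvd)
    have hg0 : Nat.gcd d m ≠ 0 := fun h => hd0 (Nat.eq_zero_of_gcd_eq_zero_left h)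
    have h2 : d ∣ Nat.gcd d m * n := by
      have h3 : d ∣ Nat.gcd (d * n) (m * n) := Nat.dvd_gcd (dvd_mul_right d n) hdvd
      rwa [Nat.gcd_mul_right] at h3
    have hq : d / Nat.gcd d m ∣ n := by
      set gd := Nat.gcd d m with hgd
      obtain ⟨t, ht⟩ := Nat.gcd_dvd_left d m
      rw [ht] at h2 ⊢
      rw [Nat.mul_div_cancel_left _ (Nat.pos_of_ne_zero hg0)]
      exact (mul_dvd_mul_iff_left hg0).mp h2
    simp only [Finset.mem_coe, Finset.mem_product, Nat.mem_divisors]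
    exact ⟨⟨Nat.gcd_dvd_right d m, hm⟩, ⟨hq, hn⟩⟩
  · intro d hd d' hd' heq
    simp only [Prod.mk.injEq] at heq
    have h1 : Nat.gcd d m ∣ d := Nat.gcd_dvd_left d m
    have h1' : Nat.gcd d' m ∣ d' := Nat.gcd_dvd_left d' m
    calc d = Nat.gcd d m * (d / Nat.gcd d m) := (Nat.mul_div_cancel' h1).symm
    _ = Nat.gcd d' m * (d' / Nat.gcd d' m) := by rw [heq.2, heq.1]
    _ = d' := Nat.mul_div_cancel' h1'

lemma d3_le_sq (m : ℕ) : d3 m ≤ m.divisors.card ^ 2 := by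
  unfold d3
  calc ∑ d ∈ m.divisors, d.divisors.card
      ≤ ∑ _d ∈ m.divisors, m.divisors.card := by
        refine Finset.sum_le_sum fun d hd => Finset.card_le_card ?_
        exact Nat.divisors_subset_of_dvd (Nat.mem_divisors.mp hd).2 (Nat.mem_divisors.mp hd).1
    _ = m.divisors.card ^ 2 := by rw [Finset.sum_const, smul_eq_mul, sq]

/-- The majorant function `g n = d(n)² n^{-1/2}`. -/
noncomputable def g (n : ℕ) : ℝ := ((n.divisors.card : ℝ)) ^ 2 * (n : ℝ) ^ (-(1 / 2 : ℝ))

lemma g_nonneg (n : ℕ) : 0 ≤ g n := by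
  unfold g
  positivity

lemma g_zero : g 0 = 0 := by simp [g]

lemma g_one : g 1 = 1 := by simp [g]

lemma g_mul_coprime {m n : ℕ} (h : m.Coprime n) : g (m * n) = g m * g n := by
  rcases eq_or_ne m 0 with rfl | hm
  · have : n = 1 := by simpa [Nat.coprime_zero_left] using h
    simp [this, g_zero]
  rcases eq_or_ne n 0 with rfl | hn
  · have : m = 1 := by simpa [Nat.coprime_zero_right] using h
    simp [this, g_zero]
  unfold g
  rw [h.card_divisors_mul, Nat.cast_mul m n, Real.mul_rpow (by positivity) (by positivity)]
  push_cast
  ring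

/-- base constant `x = 2^{-1/2}` -/
noncomputable def x : ℝ := (2 : ℝ) ^ (-(1 / 2 : ℝ))

lemma x_pos : 0 < x := Real.rpow_pos_of_pos (by norm_num) _

lemma x_lt_one : x < 1 :=
  Real.rpow_lt_one_of_one_lt_of_neg (by norm_num) (by norm_num)

/-- universal per-prime-power majorant -/
noncomputable def u (j : ℕ) : ℝ := ((j : ℝ) + 1) ^ 2 * x ^ j

lemma u_nonneg (j : ℕ) : 0 ≤ u j :=
  mul_nonneg (by positivity) (pow_nonneg x_pos.le j)

lemma summable_u : Summable u := by
  have hx : ‖x‖ < 1 := by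
    rw [Real.norm_eq_abs, _root_.abs_of_pos x_pos]; exact x_lt_one
  have h2 := summable_pow_mul_geometric_of_norm_lt_one (R := ℝ) 2 hx
  have h1 := summable_pow_mul_geometric_of_norm_lt_one (R := ℝ) 1 hx
  have h0 : Summable fun j : ℕ => x ^ j := summable_geometric_of_norm_lt_one hx
  have huu : u = fun j : ℕ => ((j : ℝ) ^ 2 * x ^ j + (2 * ((j : ℝ) ^ 1 * x ^ j) + x ^ j)) := by
    funext j; unfold u; ring
  rw [huu]
  exact h2.add ((h1.mul_left 2).add h0)

noncomputable def E : ℝ := ∑' j : ℕ, u j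

lemma one_le_E : 1 ≤ E := by
  have h0 : u 0 = 1 := by simp [u]
  calc (1 : ℝ) = u 0 := h0.symm
  _ ≤ E := Summable.le_tsum summable_u 0 fun j _ => u_nonneg j

lemma card_divisors_prime_pow {p : ℕ} (hp : p.Prime) (j : ℕ) :
    (p ^ j).divisors.card = j + 1 := by
  rw [Nat.divisors_prime_pow hp, Finset.card_map, Finset.card_range]

lemma g_prime_pow_le {p : ℕ} (hp : p.Prime) (j : ℕ) : g (p ^ j) ≤ u j := by
  unfold g u
  rw [card_divisors_prime_pow hp]
  have hppos : (0 : ℝ) < p := by exact_mod_cast hp.pos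
  have hcast : ((p ^ j : ℕ) : ℝ) = ((p : ℝ)) ^ j := by push_cast; ring
  have hswap : (((p : ℝ) ^ j : ℝ)) ^ (-(1 / 2 : ℝ)) = ((p : ℝ) ^ (-(1 / 2 : ℝ))) ^ j := by
    rw [← Real.rpow_natCast_mul hppos.le, mul_comm, Real.rpow_mul_natCast hppos.le]
  rw [hcast, hswap]
  have hbase : (p : ℝ) ^ (-(1 / 2 : ℝ)) ≤ x := by
    unfold x
    have h2p : (2 : ℝ) ≤ (p : ℝ) := by exact_mod_cast hp.two_le
    rw [Real.rpow_neg hppos.le, Real.rpow_neg (by norm_num)]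
    exact inv_anti₀ (Real.rpow_pos_of_pos (by norm_num) _)
      (Real.rpow_le_rpow (by norm_num) h2p (by norm_num))
  have hbpos : (0 : ℝ) ≤ (p : ℝ) ^ (-(1 / 2 : ℝ)) := (Real.rpow_pos_of_pos hppos _).le
  have hcastj : (((j : ℕ) + 1 : ℕ) : ℝ) = (j : ℝ) + 1 := by push_cast; ring
  rw [hcastj]
  exact mul_le_mul_of_nonneg_left (pow_le_pow_left₀ hbpos hbase j) (by positivity)

lemma summable_g_prime_pow {p : ℕ} (hp : p.Prime) :
    Summable fun j : ℕ => ‖g (p ^ j)‖ := by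
  refine Summable.of_nonneg_of_le (fun j => norm_nonneg _) (fun j => ?_) summable_u
  rw [Real.norm_eq_abs, _root_.abs_of_nonneg (g_nonneg _)]
  exact g_prime_pow_le hp j

lemma euler (k : ℕ) :
    Summable (fun m : Nat.factoredNumbers k.primeFactors => g m) ∧
      (∑' m : Nat.factoredNumbers k.primeFactors, g m)
        ≤ ∏ p ∈ k.primeFactors, E := by
  have H := EulerProduct.summable_and_hasSum_factoredNumbers_prod_filter_prime_tsum
    (f := g) g_one (fun {m n} h => g_mul_coprime h)
    (fun {p} hp => summable_g_prime_pow hp) k.primeFactors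
  have hfilter : {p ∈ k.primeFactors | p.Prime} = k.primeFactors :=
    Finset.filter_true_of_mem fun p hp => Nat.prime_of_mem_primeFactors hp
  have hsummable : Summable (fun m : Nat.factoredNumbers k.primeFactors => g m) := by
    refine H.1.of_norm_bounded fun m => ?_
    rw [Real.norm_eq_abs, _root_.abs_of_nonneg (g_nonneg _)]
  refine ⟨hsummable, ?_⟩
  rw [H.2.tsum_eq, hfilter]
  refine Finset.prod_le_prod (fun p _ => tsum_nonneg fun j => g_nonneg _) fun p hp => ?_
  have hp := Nat.prime_of_mem_primeFactors hp
  exact Summable.tsum_le_tsum (fun j => g_prime_pow_le hp j)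
    ((summable_g_prime_pow hp).congr fun j => by
      rw [Real.norm_eq_abs, _root_.abs_of_nonneg (g_nonneg _)]) summable_u

/-- `exp t ≥ (t/3)³` for `t ≥ 0`. -/
lemma cube_le_exp {t : ℝ} (ht : 0 ≤ t) : (t / 3) ^ 3 ≤ Real.exp t := by
  have h1 : t / 3 + 1 ≤ Real.exp (t / 3) := Real.add_one_le_exp _
  calc (t / 3) ^ 3 ≤ (t / 3 + 1) ^ 3 := by
        apply pow_le_pow_left₀ (by positivity)
        linarith
  _ ≤ Real.exp (t / 3) ^ 3 := pow_le_pow_left₀ (by positivity) h1 3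
  _ = Real.exp t := by
      rw [← Real.exp_nat_mul]
      congr 1
      push_cast
      ring

/-- Key small-prime bound: `(v+1)² ≤ M · 2^{vε}` for `v ≥ 1`. -/
lemma small_prime_bound (ε : ℝ) (hε : 0 < ε) {v : ℕ} (hv : 1 ≤ v) :
    ((v : ℝ) + 1) ^ 2 ≤ (max 1 (108 / (ε * Real.log 2) ^ 3)) * (2 : ℝ) ^ ((v : ℝ) * ε) := by
  set M := max 1 (108 / (ε * Real.log 2) ^ 3) with hM
  have hlog2 : 0 < Real.log 2 := Real.log_pos (by norm_num)
  have hvR : (1 : ℝ) ≤ (v : ℝ) := by exact_mod_cast hv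
  have hexp : ((v : ℝ) * ε * Real.log 2 / 3) ^ 3 ≤ (2 : ℝ) ^ ((v : ℝ) * ε) := by
    rw [Real.rpow_def_of_pos (by norm_num), mul_comm (Real.log 2)]
    exact cube_le_exp (by positivity)
  have hMge : 108 / (ε * Real.log 2) ^ 3 ≤ M := le_max_right _ _
  have h4 : ((v : ℝ) + 1) ^ 2 ≤ 4 * (v : ℝ) ^ 2 := by nlinarith
  have h5 : 4 * (v : ℝ) ^ 2 ≤ (108 / (ε * Real.log 2) ^ 3) * (((v : ℝ) * ε * Real.log 2 / 3) ^ 3) := by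
    have hεlog : 0 < (ε * Real.log 2) ^ 3 := by positivity
    rw [div_mul_eq_mul_div, le_div_iff₀ hεlog]
    have key : ((v : ℝ) * ε * Real.log 2 / 3) ^ 3 = (v : ℝ) ^ 3 * (ε * Real.log 2) ^ 3 / 27 := by
      ring
    rw [key]
    have hv3 : (v : ℝ) ^ 2 ≤ (v : ℝ) ^ 3 := by nlinarith
    nlinarith [pow_pos (mul_pos hε hlog2) 3]
  have hMpos : (0 : ℝ) < M := lt_of_lt_of_le one_pos (le_max_left _ _)
  calc ((v : ℝ) + 1) ^ 2
      ≤ (108 / (ε * Real.log 2) ^ 3) * (((v : ℝ) * ε * Real.log 2 / 3) ^ 3) := le_trans h4 h5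
  _ ≤ M * (((v : ℝ) * ε * Real.log 2 / 3) ^ 3) :=
      mul_le_mul_of_nonneg_right hMge (by positivity)
  _ ≤ M * (2 : ℝ) ^ ((v : ℝ) * ε) := mul_le_mul_of_nonneg_left hexp hMpos.le

/-- Main arithmetic lemma: the multiplicative prefactor is `≪ k^ε`. -/
lemma prod_bound (ε : ℝ) (hε : 0 < ε) (B : ℝ) (hB : 1 ≤ B) :
    ∃ C : ℝ, ∀ k : ℕ, 0 < k →
      (∏ p ∈ k.primeFactors, (((k.factorization p : ℝ) + 1) ^ 2 * B)) ≤ C * (k : ℝ) ^ ε := by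
  set M := max 1 (108 / (ε * Real.log 2) ^ 3) with hM
  have hM1 : (1 : ℝ) ≤ M := le_max_left _ _
  have hMB1 : (1 : ℝ) ≤ M * B := by nlinarith
  set N : ℕ := ⌈(4 * B) ^ (1 / ε)⌉₊ with hN
  refine ⟨(M * B) ^ (N + 1), fun k hk => ?_⟩
  have hk0 : k ≠ 0 := hk.ne'
  -- express `k^ε` as a product over prime factors
  have hkprod : (k : ℝ) ^ ε = ∏ p ∈ k.primeFactors, (p : ℝ) ^ ((k.factorization p : ℝ) * ε) := by
    have h1 : (k : ℝ) = ∏ p ∈ k.primeFactors, ((p : ℝ)) ^ (k.factorization p) := by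
      conv_lhs => rw [← Nat.factorization_prod_pow_eq_self hk0]
      rw [Finsupp.prod, Nat.cast_prod, Nat.support_factorization]
      push_cast
      rfl
    rw [h1, ← Real.finset_prod_rpow _ _ (fun p _ => by positivity) ε]
    refine Finset.prod_congr rfl fun p hp => ?_
    have hppos : (0 : ℝ) ≤ (p : ℝ) := by positivity
    exact (Real.rpow_natCast_mul hppos _ ε).symm
  -- per-prime bound
  have hkey : ∀ p ∈ k.primeFactors,
      ((k.factorization p : ℝ) + 1) ^ 2 * B ≤
        (if p ≤ N then M * B else 1) * (p : ℝ) ^ ((k.factorization p : ℝ) * ε) := by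
    intro p hp
    have hpp := Nat.prime_of_mem_primeFactors hp
    have hv1 : 1 ≤ k.factorization p :=
      hpp.factorization_pos_of_dvd hk0 (Nat.dvd_of_mem_primeFactors hp)
    set v := k.factorization p with hvdef
    have hp2 : (2 : ℝ) ≤ (p : ℝ) := by exact_mod_cast hpp.two_le
    have hppos : (0 : ℝ) < (p : ℝ) := by linarith
    by_cases hpN : p ≤ N
    · rw [if_pos hpN]
      have h1 := small_prime_bound ε hε hv1
      have h2 : (2 : ℝ) ^ ((v : ℝ) * ε) ≤ (p : ℝ) ^ ((v : ℝ) * ε) :=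
        Real.rpow_le_rpow (by norm_num) hp2 (by positivity)
      have hMpos : (0 : ℝ) < M := lt_of_lt_of_le one_pos hM1
      calc ((v : ℝ) + 1) ^ 2 * B ≤ (M * (2 : ℝ) ^ ((v : ℝ) * ε)) * B :=
            mul_le_mul_of_nonneg_right h1 (by linarith)
      _ ≤ (M * (p : ℝ) ^ ((v : ℝ) * ε)) * B := by
            have h3 : M * (2 : ℝ) ^ ((v : ℝ) * ε) ≤ M * (p : ℝ) ^ ((v : ℝ) * ε) :=
              mul_le_mul_of_nonneg_left h2 hMpos.le
            exact mul_le_mul_of_nonneg_right h3 (by linarith)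
      _ = M * B * (p : ℝ) ^ ((v : ℝ) * ε) := by ring
    · rw [if_neg hpN, one_mul]
      have hpN' : ((4 * B) ^ ((1 : ℝ) / ε)) ≤ (p : ℝ) := by
        have hceil : (4 * B) ^ ((1 : ℝ) / ε) ≤ (N : ℝ) := Nat.le_ceil _
        have hNp : (N : ℝ) ≤ (p : ℝ) := by exact_mod_cast (not_le.mp hpN).le
        linarith
      have h4B : 4 * B ≤ (p : ℝ) ^ ε := by
        have h := Real.rpow_le_rpow (by positivity) hpN' hε.le
        rwa [← Real.rpow_mul (by positivity), one_div, inv_mul_cancel₀ hε.ne',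
          Real.rpow_one] at h
      have hv2 : ((v : ℝ) + 1) ^ 2 ≤ (4 : ℝ) ^ v := by
        have hn : v + 1 ≤ 2 ^ v := Nat.lt_two_pow_self (n := v)
        have hnR : (v : ℝ) + 1 ≤ (2 : ℝ) ^ v := by exact_mod_cast hn
        calc ((v : ℝ) + 1) ^ 2 ≤ ((2 : ℝ) ^ v) ^ 2 := by
              apply pow_le_pow_left₀ (by positivity) hnR
        _ = (4 : ℝ) ^ v := by
              rw [← pow_mul, mul_comm, pow_mul]
              norm_num
      have hB4 : ((v : ℝ) + 1) ^ 2 * B ≤ (4 * B) ^ v := by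
        have hBv : B ≤ B ^ v := le_self_pow₀ hB (by omega)
        calc ((v : ℝ) + 1) ^ 2 * B ≤ (4 : ℝ) ^ v * B ^ v := by
              apply mul_le_mul hv2 hBv (by linarith) (by positivity)
        _ = (4 * B) ^ v := (mul_pow 4 B v).symm
      calc ((v : ℝ) + 1) ^ 2 * B ≤ (4 * B) ^ v := hB4
      _ ≤ ((p : ℝ) ^ ε) ^ v := pow_le_pow_left₀ (by linarith) h4B v
      _ = (p : ℝ) ^ ((v : ℝ) * ε) := by
            rw [mul_comm, Real.rpow_mul hppos.le, Real.rpow_natCast]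
  -- combine
  calc ∏ p ∈ k.primeFactors, (((k.factorization p : ℝ) + 1) ^ 2 * B)
      ≤ ∏ p ∈ k.primeFactors,
          ((if p ≤ N then M * B else 1) * (p : ℝ) ^ ((k.factorization p : ℝ) * ε)) :=
        Finset.prod_le_prod (fun p _ => by positivity) hkey
  _ = (∏ p ∈ k.primeFactors, (if p ≤ N then M * B else 1)) *
        ∏ p ∈ k.primeFactors, (p : ℝ) ^ ((k.factorization p : ℝ) * ε) :=
        Finset.prod_mul_distrib
  _ ≤ (M * B) ^ (N + 1) * (k : ℝ) ^ ε := by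
      rw [← hkprod]
      have hprodite : (∏ p ∈ k.primeFactors, (if p ≤ N then M * B else 1)) ≤ (M * B) ^ (N + 1) := by
        rw [Finset.prod_ite, Finset.prod_const, Finset.prod_const, one_pow, mul_one]
        have hcard : {p ∈ k.primeFactors | p ≤ N}.card ≤ N + 1 := by
          have hsub : {p ∈ k.primeFactors | p ≤ N} ⊆ Finset.range (N + 1) := by
            intro p hp
            rw [Finset.mem_filter] at hp
            exact Finset.mem_range.mpr (by omega)
          calc {p ∈ k.primeFactors | p ≤ N}.card ≤ (Finset.range (N + 1)).card :=
                Finset.card_le_card hsub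
          _ = N + 1 := Finset.card_range _
        exact pow_le_pow_right₀ hMB1 hcard
      exact mul_le_mul_of_nonneg_right hprodite (Real.rpow_nonneg (by positivity) ε)

end FkAux

open FkAux in
/-- For non-principal `χ` and `Re(s) > 1/2`, `|F_k(χ,s)| ≪_ε k^ε |L(χ,s)|^3`. -/
theorem Fk_nonprincipal_bound (ε : ℝ) (hε : 0 < ε) (q : ℕ) [NeZero q]
    (χ : DirichletCharacter ℂ q) (hχ : χ ≠ 1) :
    ∃ C : ℝ, ∀ k : ℕ, 0 < k → ∀ s : ℂ, 1 / 2 < s.re →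
      ‖Fk χ k s‖ ≤ C * (k : ℝ) ^ ε * ‖DirichletCharacter.LFunction χ s‖ ^ 3 := by
  obtain ⟨C, hC⟩ := prod_bound ε hε (8 * E) (by nlinarith [one_le_E])
  refine ⟨C, fun k hk s hs => ?_⟩
  have hk0 : k ≠ 0 := hk.ne'
  set D : ℝ := ((k.divisors.card : ℝ)) ^ 2 with hD
  -- bound on each term of the sum
  have hterm : ∀ n : {n : ℕ // 0 < n ∧ ∀ p : ℕ, p.Prime → p ∣ n → p ∣ k},
      ‖χ ((n : ℕ) : ZMod q) * (d3 (k * (n : ℕ)) : ℂ) / (((n : ℕ) : ℕ) : ℂ) ^ s‖ ≤ D * g n := by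
    rintro ⟨n, hn, hfac⟩
    simp only
    rw [norm_div, norm_mul, norm_natCast_cpow_of_pos hn]
    have hχn : ‖χ ((n : ℕ) : ZMod q)‖ ≤ 1 := χ.norm_le_one _
    have hd3 : ‖((d3 (k * n) : ℕ) : ℂ)‖ ≤ D * ((n.divisors.card : ℝ)) ^ 2 := by
      rw [Complex.norm_natCast]
      have h1 : d3 (k * n) ≤ (k.divisors.card * n.divisors.card) ^ 2 :=
        le_trans (d3_le_sq _) (Nat.pow_le_pow_left (card_divisors_mul_le k n hk0 hn.ne') 2)
      calc (d3 (k * n) : ℝ) ≤ (((k.divisors.card * n.divisors.card) ^ 2 : ℕ) : ℝ) := by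
            exact_mod_cast h1
      _ = D * ((n.divisors.card : ℝ)) ^ 2 := by rw [hD]; push_cast; ring
    have hn1 : (1 : ℝ) ≤ (n : ℝ) := by exact_mod_cast hn
    have hhalf : (0 : ℝ) < (n : ℝ) ^ ((1 : ℝ) / 2) := Real.rpow_pos_of_pos (by linarith) _
    have hmono : (n : ℝ) ^ ((1 : ℝ) / 2) ≤ (n : ℝ) ^ s.re :=
      Real.rpow_le_rpow_of_exponent_le hn1 (by linarith)
    have hgoal : D * g n = (D * ((n.divisors.card : ℝ)) ^ 2) / (n : ℝ) ^ ((1 : ℝ) / 2) := by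
      unfold g
      rw [Real.rpow_neg (by linarith : (0:ℝ) ≤ (n:ℝ))]
      ring
    rw [hgoal]
    refine div_le_div₀ (by positivity) ?_ hhalf hmono
    calc ‖χ ((n : ℕ) : ZMod q)‖ * ‖((d3 (k * n) : ℕ) : ℂ)‖
        ≤ 1 * (D * ((n.divisors.card : ℝ)) ^ 2) :=
          mul_le_mul hχn hd3 (norm_nonneg _) zero_le_one
    _ = D * ((n.divisors.card : ℝ)) ^ 2 := one_mul _
  -- transfer to factored numbers
  have hiff : ∀ n : ℕ, (0 < n ∧ ∀ p : ℕ, p.Prime → p ∣ n → p ∣ k) ↔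
      n ∈ Nat.factoredNumbers k.primeFactors := by
    intro n
    rw [Nat.mem_factoredNumbers]
    constructor
    · rintro ⟨hn, h⟩
      refine ⟨hn.ne', fun p hp => ?_⟩
      have hpp : p.Prime := Nat.prime_of_mem_primeFactorsList hp
      have hpd : p ∣ n := Nat.dvd_of_mem_primeFactorsList hp
      exact Nat.mem_primeFactors.mpr ⟨hpp, h p hpp hpd, hk0⟩
    · rintro ⟨hn, h⟩
      refine ⟨Nat.pos_of_ne_zero hn, fun p hpp hpd => ?_⟩
      exact Nat.dvd_of_mem_primeFactors
        (h p ((Nat.mem_primeFactorsList hn).mpr ⟨hpp, hpd⟩))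
  set eqv := Equiv.subtypeEquivRight hiff
  have hDg : Summable (fun m : Nat.factoredNumbers k.primeFactors => D * g m) :=
    (euler k).1.mul_left D
  have hcomp : (fun n : {n : ℕ // 0 < n ∧ ∀ p : ℕ, p.Prime → p ∣ n → p ∣ k} => D * g n) =
      (fun m : Nat.factoredNumbers k.primeFactors => D * g m) ∘ eqv := rfl
  have hmajsum : Summable
      (fun n : {n : ℕ // 0 < n ∧ ∀ p : ℕ, p.Prime → p ∣ n → p ∣ k} => D * g n) := by
    rw [hcomp]
    exact hDg.comp_injective eqv.injective
  have hsum : Summable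
      (fun n : {n : ℕ // 0 < n ∧ ∀ p : ℕ, p.Prime → p ∣ n → p ∣ k} =>
        ‖χ ((n : ℕ) : ZMod q) * (d3 (k * (n : ℕ)) : ℂ) / (((n : ℕ) : ℕ) : ℂ) ^ s‖) :=
    Summable.of_nonneg_of_le (fun n => norm_nonneg _) hterm hmajsum
  have htsum : ‖∑' n : {n : ℕ // 0 < n ∧ ∀ p : ℕ, p.Prime → p ∣ n → p ∣ k},
      χ ((n : ℕ) : ZMod q) * (d3 (k * (n : ℕ)) : ℂ) / (((n : ℕ) : ℕ) : ℂ) ^ s‖ ≤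
      D * ∏ p ∈ k.primeFactors, E := by
    calc ‖∑' n : {n : ℕ // 0 < n ∧ ∀ p : ℕ, p.Prime → p ∣ n → p ∣ k},
        χ ((n : ℕ) : ZMod q) * (d3 (k * (n : ℕ)) : ℂ) / (((n : ℕ) : ℕ) : ℂ) ^ s‖
        ≤ ∑' n : {n : ℕ // 0 < n ∧ ∀ p : ℕ, p.Prime → p ∣ n → p ∣ k},
          ‖χ ((n : ℕ) : ZMod q) * (d3 (k * (n : ℕ)) : ℂ) / (((n : ℕ) : ℕ) : ℂ) ^ s‖ :=
        norm_tsum_le_tsum_norm hsum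
    _ ≤ ∑' n : {n : ℕ // 0 < n ∧ ∀ p : ℕ, p.Prime → p ∣ n → p ∣ k}, D * g n :=
        Summable.tsum_le_tsum hterm hsum hmajsum
    _ = ∑' m : Nat.factoredNumbers k.primeFactors, D * g m := by
        rw [hcomp, Function.comp_def]
        exact eqv.tsum_eq fun m : Nat.factoredNumbers k.primeFactors => D * g (m : ℕ)
    _ = D * ∑' m : Nat.factoredNumbers k.primeFactors, g m := tsum_mul_left
    _ ≤ D * ∏ p ∈ k.primeFactors, E :=
        mul_le_mul_of_nonneg_left (euler k).2 (by positivity)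
  -- bound on the finite product
  have hprod : ‖∏ p ∈ k.primeFactors, (1 - χ ((p : ℕ) : ZMod q) * ((p : ℕ) : ℂ) ^ (-s)) ^ 3‖ ≤
      ∏ p ∈ k.primeFactors, (8 : ℝ) := by
    rw [norm_prod]
    refine Finset.prod_le_prod (fun p _ => norm_nonneg _) fun p hp => ?_
    have hpp := Nat.prime_of_mem_primeFactors hp
    rw [norm_pow]
    have hfac : ‖1 - χ ((p : ℕ) : ZMod q) * ((p : ℕ) : ℂ) ^ (-s)‖ ≤ 2 := by
      have h1 : ‖χ ((p : ℕ) : ZMod q)‖ ≤ 1 := χ.norm_le_one _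
      have h2 : ‖((p : ℕ) : ℂ) ^ (-s)‖ ≤ 1 := by
        rw [norm_natCast_cpow_of_pos hpp.pos, neg_re]
        refine Real.rpow_le_one_of_one_le_of_nonpos (by exact_mod_cast hpp.one_lt.le) (by linarith)
      calc ‖1 - χ ((p : ℕ) : ZMod q) * ((p : ℕ) : ℂ) ^ (-s)‖
          ≤ ‖(1 : ℂ)‖ + ‖χ ((p : ℕ) : ZMod q) * ((p : ℕ) : ℂ) ^ (-s)‖ := norm_sub_le _ _
      _ ≤ 1 + 1 * 1 := by
          rw [norm_one, norm_mul]
          have := mul_le_mul h1 h2 (norm_nonneg _) zero_le_one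
          linarith
      _ = 2 := by norm_num
    calc ‖1 - χ ((p : ℕ) : ZMod q) * ((p : ℕ) : ℂ) ^ (-s)‖ ^ 3 ≤ 2 ^ 3 :=
        pow_le_pow_left₀ (norm_nonneg _) hfac 3
    _ = 8 := by norm_num
  -- identify `D` with the product over prime factors
  have hDprod : D = ∏ p ∈ k.primeFactors, ((k.factorization p : ℝ) + 1) ^ 2 := by
    rw [hD]
    have h1 : (k.divisors.card : ℝ) = ∏ p ∈ k.primeFactors, ((k.factorization p : ℝ) + 1) := by
      rw [Nat.card_divisors hk0]
      push_cast
      rfl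
    rw [h1, ← Finset.prod_pow]
  -- assemble
  rw [Fk, norm_mul, norm_mul, norm_pow]
  have hL3 : (0 : ℝ) ≤ ‖DirichletCharacter.LFunction χ s‖ ^ 3 := by positivity
  calc ‖∑' n : {n : ℕ // 0 < n ∧ ∀ p : ℕ, p.Prime → p ∣ n → p ∣ k},
      χ ((n : ℕ) : ZMod q) * (d3 (k * (n : ℕ)) : ℂ) / (((n : ℕ) : ℕ) : ℂ) ^ s‖ *
      (‖∏ p ∈ k.primeFactors, (1 - χ ((p : ℕ) : ZMod q) * ((p : ℕ) : ℂ) ^ (-s)) ^ 3‖ *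
        ‖DirichletCharacter.LFunction χ s‖ ^ 3)
      ≤ (D * ∏ p ∈ k.primeFactors, E) *
        ((∏ p ∈ k.primeFactors, (8 : ℝ)) * ‖DirichletCharacter.LFunction χ s‖ ^ 3) := by
        have hE0 : (0 : ℝ) ≤ E := le_trans zero_le_one one_le_E
        refine mul_le_mul htsum ?_ (by positivity) ?_
        · exact mul_le_mul_of_nonneg_right hprod hL3
        · exact mul_nonneg (by positivity) (Finset.prod_nonneg fun p _ => hE0)
  _ = (∏ p ∈ k.primeFactors, (((k.factorization p : ℝ) + 1) ^ 2 * (8 * E))) *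
        ‖DirichletCharacter.LFunction χ s‖ ^ 3 := by
        rw [hDprod]
        have hsplit : (∏ p ∈ k.primeFactors, (((k.factorization p : ℝ) + 1) ^ 2 * (8 * E))) =
            (∏ p ∈ k.primeFactors, ((k.factorization p : ℝ) + 1) ^ 2) *
              ((∏ p ∈ k.primeFactors, (8 : ℝ)) * ∏ p ∈ k.primeFactors, E) := by
          rw [Finset.prod_mul_distrib, Finset.prod_mul_distrib]
        rw [hsplit]
        ring
  _ ≤ C * (k : ℝ) ^ ε * ‖DirichletCharacter.LFunction χ s‖ ^ 3 :=
        mul_le_mul_of_nonneg_right (hC k hk) hL3
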